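/- arXiv:1910.02843 — 3 statements merged into one kernel-verified Lean document; each statement's English description precedes it below -/
import Mathlib

section
/- Let T : H → K be a bounded injective linear operator with closed range between real Hilbert spaces, and let G : K → K be firmly nonexpansive with respect to the norm of K. Then the operator T† G T : H → H is firmly nonexpansive with respect to the inner product ⟨x, y⟩_T := ⟨Tx, Ty⟩_K on H, i.e., ‖T†GTx − T†GTy‖_T² ≤ ⟨x − y, T†GTx − T†GTy⟩_T for all x, y ∈ H. -/
open scoped RealInnerProductSpace

/-- If `T : H → K` is bounded, injective with closed range, `T†` its
Moore–Penrose inverse (`T† T = id`, `T T† = P_{R(T)}`), and `G : K → K` is firmly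
nonexpansive, then `T† G T` is firmly nonexpansive with respect to the inner product
`⟪x, y⟫_T = ⟪T x, T y⟫` on `H`. -/
theorem stmt1
    {H K : Type*} [NormedAddCommGroup H] [InnerProductSpace ℝ H] [CompleteSpace H]
    [NormedAddCommGroup K] [InnerProductSpace ℝ K] [CompleteSpace K]
    (T : H →L[ℝ] K) (hinj : Function.Injective T)
    (hrange : IsClosed (Set.range T))
    (Tdag : K →L[ℝ] H)
    (hid : ∀ x : H, Tdag (T x) = x)
    (hproj : ∀ z : K, ∀ x : H, ⟪z - T (Tdag z), T x⟫ = 0)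
    (G : K → K)
    (hG : ∀ u v : K, ‖G u - G v‖ ^ 2 ≤ ⟪u - v, G u - G v⟫) :
    ∀ x y : H,
      ‖T (Tdag (G (T x))) - T (Tdag (G (T y)))‖ ^ 2
        ≤ ⟪T x - T y, T (Tdag (G (T x))) - T (Tdag (G (T y)))⟫ := by
  intro x y
  set u := G (T x) with hu
  set v := G (T y) with hv
  have hPsub : T (Tdag u) - T (Tdag v) = T (Tdag (u - v)) := by
    simp [map_sub]
  rw [hPsub]
  set P := T (Tdag (u - v)) with hP
  -- orthogonality of (u - v) - P to range of T
  have key : ∀ w : H, ⟪u - v - P, T w⟫ = 0 := fun w => hproj (u - v) w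
  -- Pythagoras: ‖P‖² ≤ ‖u - v‖²
  have h1 : ⟪u - v - P, P⟫ = 0 := key (Tdag (u - v))
  have hpy : ‖u - v‖ ^ 2 = ‖u - v - P‖ ^ 2 + ‖P‖ ^ 2 := by
    have := norm_add_sq_real (u - v - P) P
    simpa [h1, sub_add_cancel] using this
  have h2 : ‖P‖ ^ 2 ≤ ‖u - v‖ ^ 2 := by
    rw [hpy]
    nlinarith [sq_nonneg ‖u - v - P‖]
  -- firm nonexpansiveness of G
  have h3 : ‖u - v‖ ^ 2 ≤ ⟪T x - T y, u - v⟫ := hG (T x) (T y)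
  -- inner product identity
  have h4 : ⟪T x - T y, u - v⟫ = ⟪T x - T y, P⟫ := by
    have h5 : ⟪u - v - P, T (x - y)⟫ = 0 := key (x - y)
    rw [map_sub] at h5
    have h5' : ⟪T x - T y, u - v - P⟫ = 0 := by
      rw [real_inner_comm]; exact h5
    rw [inner_sub_right] at h5'
    linarith
  linarith
end

section
/- Let H be a real Hilbert space and Φ : H → ℝ a Fréchet differentiable function such that its gradient ∇Φ is nonexpansive and the gradient of a convex function (i.e., Φ is convex and ∇Φ is 1-Lipschitz). Then ∇Φ is firmly nonexpansive. -/
open scoped RealInnerProductSpace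
open InnerProductSpace

section Aux

variable {H : Type*} [NormedAddCommGroup H] [InnerProductSpace ℝ H] [CompleteSpace H]

/-- derivative along a line -/
lemma line_hasDerivAt (Φ : H → ℝ) (hdiff : Differentiable ℝ Φ) (x v : H) (t : ℝ) :
    HasDerivAt (fun s : ℝ => Φ (x + s • v)) ⟪gradient Φ (x + t • v), v⟫ t := by
  have hc : HasDerivAt (fun s : ℝ => x + s • v) v t := by
    simpa using ((hasDerivAt_id t).smul_const v).const_add x
  have hF : HasFDerivAt Φ (toDual ℝ H (gradient Φ (x + t • v))) (x + t • v) :=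
    hasGradientAt_iff_hasFDerivAt.mp (hdiff _).hasGradientAt
  have := hF.comp_hasDerivAt t hc
  simpa [toDual_apply_apply, Function.comp_def] using this

/-- subgradient inequality -/
lemma subgrad (Φ : H → ℝ) (hdiff : Differentiable ℝ Φ) (hconv : ConvexOn ℝ Set.univ Φ)
    (x z : H) : Φ x + ⟪gradient Φ x, z - x⟫ ≤ Φ z := by
  set g : ℝ → ℝ := fun s => Φ (x + s • (z - x)) with hg
  have hgconv : ConvexOn ℝ Set.univ g := by
    have h := hconv.comp_affineMap (AffineMap.lineMap x z : ℝ →ᵃ[ℝ] H)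
    have heq : (Φ ∘ (AffineMap.lineMap x z : ℝ →ᵃ[ℝ] H)) = g := by
      funext s
      simp [hg, AffineMap.lineMap_apply, add_comm]
    have hset : (AffineMap.lineMap x z : ℝ →ᵃ[ℝ] H) ⁻¹' Set.univ = Set.univ := by simp
    rw [heq, hset] at h
    exact h
  have hderiv : HasDerivAt g ⟪gradient Φ x, z - x⟫ 0 := by
    simpa using line_hasDerivAt Φ hdiff x (z - x) 0
  have h01 : (0:ℝ) < 1 := one_pos
  have := hgconv.le_slope_of_hasDerivAt (Set.mem_univ (0:ℝ)) (Set.mem_univ 1) h01 hderiv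
  have hslope : slope g 0 1 = Φ z - Φ x := by
    simp [slope, hg]
  rw [hslope] at this
  linarith

/-- descent lemma -/
lemma descent (Φ : H → ℝ) (hdiff : Differentiable ℝ Φ)
    (hne : ∀ x y : H, ‖gradient Φ x - gradient Φ y‖ ≤ ‖x - y‖)
    (x z : H) : Φ z ≤ Φ x + ⟪gradient Φ x, z - x⟫ + (1/2) * ‖z - x‖ ^ 2 := by
  set v := z - x with hv
  set g' : ℝ → ℝ := fun t => ⟪gradient Φ (x + t • v), v⟫ with hg'
  have hlip : LipschitzWith 1 (gradient Φ) := by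
    apply LipschitzWith.of_dist_le_mul
    intro a b
    simpa [dist_eq_norm] using hne a b
  have hcontg' : Continuous g' := by
    apply Continuous.inner
    · exact hlip.continuous.comp (by continuity)
    · exact continuous_const
  have hderiv : ∀ t ∈ Set.uIcc (0:ℝ) 1, HasDerivAt (fun s : ℝ => Φ (x + s • v)) (g' t) t :=
    fun t _ => line_hasDerivAt Φ hdiff x v t
  have hint : IntervalIntegrable g' MeasureTheory.volume 0 1 :=
    hcontg'.intervalIntegrable 0 1
  have hftc : ∫ t in (0:ℝ)..1, g' t = Φ (x + (1:ℝ) • v) - Φ (x + (0:ℝ) • v) :=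
    intervalIntegral.integral_eq_sub_of_hasDerivAt hderiv hint
  have hbound : ∀ t ∈ Set.Icc (0:ℝ) 1, g' t ≤ g' 0 + t * ‖v‖ ^ 2 := by
    intro t ht
    have h1 : g' t - g' 0 = ⟪gradient Φ (x + t • v) - gradient Φ (x + (0:ℝ) • v), v⟫ := by
      simp [hg', inner_sub_left]
    have h2 : ⟪gradient Φ (x + t • v) - gradient Φ (x + (0:ℝ) • v), v⟫ ≤ t * ‖v‖ ^ 2 := by
      calc ⟪gradient Φ (x + t • v) - gradient Φ (x + (0:ℝ) • v), v⟫
          ≤ ‖gradient Φ (x + t • v) - gradient Φ (x + (0:ℝ) • v)‖ * ‖v‖ :=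
            real_inner_le_norm _ _
        _ ≤ ‖(x + t • v) - (x + (0:ℝ) • v)‖ * ‖v‖ := by
            gcongr; exact hne _ _
        _ = (t * ‖v‖) * ‖v‖ := by
            rw [show (x + t • v) - (x + (0:ℝ) • v) = t • v by abel_nf; module]
            rw [norm_smul, Real.norm_eq_abs, abs_of_nonneg ht.1]
        _ = t * ‖v‖ ^ 2 := by ring
    linarith
  have hmono : ∫ t in (0:ℝ)..1, g' t ≤ ∫ t in (0:ℝ)..1, (g' 0 + t * ‖v‖ ^ 2) := by
    apply intervalIntegral.integral_mono_on (by norm_num) hint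
    · exact (continuous_const.add (continuous_id.mul continuous_const)).intervalIntegrable 0 1
    · exact hbound
  have hval : ∫ t in (0:ℝ)..1, (g' 0 + t * ‖v‖ ^ 2) = g' 0 + (1/2) * ‖v‖ ^ 2 := by
    have hi2 : IntervalIntegrable (fun t : ℝ => t * ‖v‖ ^ 2) MeasureTheory.volume 0 1 :=
      (Continuous.intervalIntegrable (by fun_prop) 0 1)
    rw [intervalIntegral.integral_add intervalIntegrable_const hi2,
      intervalIntegral.integral_mul_const, integral_id, intervalIntegral.integral_const]
    norm_num
  have hz : x + (1:ℝ) • v = z := by simp [hv]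
  have hx : x + (0:ℝ) • v = x := by simp
  have hg'0 : g' 0 = ⟪gradient Φ x, z - x⟫ := by simp [hg', hv]
  rw [hz, hx] at hftc
  rw [hval, hg'0] at hmono
  linarith [hftc ▸ hmono]

/-- Nesterov-type lower bound -/
lemma nesterov (Φ : H → ℝ) (hdiff : Differentiable ℝ Φ) (hconv : ConvexOn ℝ Set.univ Φ)
    (hne : ∀ x y : H, ‖gradient Φ x - gradient Φ y‖ ≤ ‖x - y‖)
    (x z : H) :
    Φ x + ⟪gradient Φ x, z - x⟫ + (1/2) * ‖gradient Φ z - gradient Φ x‖ ^ 2 ≤ Φ z := by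
  set gx := gradient Φ x
  set gz := gradient Φ z
  set w := z - (gz - gx) with hw
  have h1 := subgrad Φ hdiff hconv x w
  have h2 := descent Φ hdiff hne z w
  have hwz : w - z = -(gz - gx) := by rw [hw]; abel
  have e1 : ⟪gx, w - x⟫ = ⟪gx, z - x⟫ - ⟪gx, gz - gx⟫ := by
    rw [show w - x = (z - x) - (gz - gx) by rw [hw]; abel, inner_sub_right]
  have e2 : ⟪gz, w - z⟫ = -⟪gz, gz - gx⟫ := by
    rw [hwz, inner_neg_right]
  have e3 : ‖w - z‖ ^ 2 = ‖gz - gx‖ ^ 2 := by rw [hwz, norm_neg]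
  have e4 : ⟪gz, gz - gx⟫ - ⟪gx, gz - gx⟫ = ‖gz - gx‖ ^ 2 := by
    rw [← inner_sub_left, real_inner_self_eq_norm_sq]
  rw [e1] at h1
  rw [e2, e3] at h2
  nlinarith [h1, h2, e4]

end Aux

/-- Baillon–Haddad type: If `Φ : H → ℝ` is Fréchet differentiable and
convex on a real Hilbert space and its gradient `∇Φ` is nonexpansive, then `∇Φ` is
firmly nonexpansive. -/
theorem stmt3
    {H : Type*} [NormedAddCommGroup H] [InnerProductSpace ℝ H] [CompleteSpace H]
    (Φ : H → ℝ) (hdiff : Differentiable ℝ Φ) (hconv : ConvexOn ℝ Set.univ Φ)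
    (hne : ∀ x y : H, ‖gradient Φ x - gradient Φ y‖ ≤ ‖x - y‖) :
    ∀ x y : H, ‖gradient Φ x - gradient Φ y‖ ^ 2 ≤ ⟪x - y, gradient Φ x - gradient Φ y⟫ := by
  intro x y
  have h1 := nesterov Φ hdiff hconv hne x y
  have h2 := nesterov Φ hdiff hconv hne y x
  have e1 : ‖gradient Φ y - gradient Φ x‖ = ‖gradient Φ x - gradient Φ y‖ := by
    rw [← norm_neg]; congr 1; abel
  have e2 : ⟪gradient Φ x, y - x⟫ + ⟪gradient Φ y, x - y⟫
      = -⟪x - y, gradient Φ x - gradient Φ y⟫ := by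
    simp only [inner_sub_left, inner_sub_right]
    rw [real_inner_comm x (gradient Φ x), real_inner_comm y (gradient Φ x),
      real_inner_comm x (gradient Φ y), real_inner_comm y (gradient Φ y)]
    ring
  rw [e1] at h1
  nlinarith [h1, h2, e2]
end

section
/- Let T : H → K be a bounded injective linear operator with closed range and g ∈ Γ₀(K). Then for every x ∈ H, T† prox_g(Tx) = argmin_{y ∈ H} { ½‖x − y‖_T² + f(y) }, where ‖·‖_T := ‖T·‖_K and f(x) := (g □ (½‖·‖_K² + ι_{N(T*)}))(Tx), with □ denoting infimal convolution and ι_{N(T*)} the indicator function of the kernel of T*. In particular, T† prox_g T is the proximity operator of f on H equipped with the norm ‖·‖_T. -/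
open scoped RealInnerProductSpace

set_option maxHeartbeats 1000000 in
/-- Let `T : H → K` be bounded, injective with closed range, `T†` its
Moore–Penrose inverse, and `g ∈ Γ₀(K)` (convex, lower semicontinuous, real-valued)
with proximity operator `prox_g`. Then `T† (prox_g (T x))` is the unique minimizer of
`y ↦ ½‖x − y‖_T² + f(y)` where `‖u‖_T = ‖T u‖` and
`f(x) = (g □ (½‖·‖² + ι_{N(T*)}))(T x)`, the infimal convolution being taken over the
decompositions `T x = w + n` with `n ∈ N(T*)`. Thus `T† prox_g T` is the proximity
operator of `f` on `(H, ‖·‖_T)`. -/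
theorem stmt8
    {H K : Type*} [NormedAddCommGroup H] [InnerProductSpace ℝ H] [CompleteSpace H]
    [NormedAddCommGroup K] [InnerProductSpace ℝ K] [CompleteSpace K]
    (T : H →L[ℝ] K) (hinj : Function.Injective T)
    (hrange : IsClosed (Set.range T))
    (Tdag : K →L[ℝ] H)
    (hid : ∀ x : H, Tdag (T x) = x)
    (hproj : ∀ z : K, ∀ x : H, ⟪z - T (Tdag z), T x⟫ = 0)
    (g : K → ℝ) (hgconv : ConvexOn ℝ Set.univ g) (hglsc : LowerSemicontinuous g)
    (proxg : K → K)
    (hproxg : ∀ z w : K, w ≠ proxg z →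
      (1 / 2) * ‖z - proxg z‖ ^ 2 + g (proxg z) < (1 / 2) * ‖z - w‖ ^ 2 + g w)
    (f : H → ℝ)
    (hf : ∀ x : H, f x =
      ⨅ w : {w : K // ContinuousLinearMap.adjoint T (T x - w) = 0},
        (g w + (1 / 2) * ‖T x - (w : K)‖ ^ 2)) :
    ∀ x y : H, y ≠ Tdag (proxg (T x)) →
      (1 / 2) * ‖T x - T (Tdag (proxg (T x)))‖ ^ 2 + f (Tdag (proxg (T x)))
        < (1 / 2) * ‖T x - T y‖ ^ 2 + f y := by
  intro x y hy
  set w0 : K := proxg (T x) with hw0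
  set y0 : H := Tdag (proxg (T x)) with hy0
  -- adjoint facts
  have hadj : ∀ u : K, ContinuousLinearMap.adjoint T u = 0 → ∀ x' : H, ⟪u, T x'⟫ = 0 := by
    intro u hu x'
    rw [← ContinuousLinearMap.adjoint_inner_left T x' u, hu, inner_zero_left]
  have hadj' : ∀ u : K, (∀ x' : H, ⟪u, T x'⟫ = 0) → ContinuousLinearMap.adjoint T u = 0 := by
    intro u hu
    have h1 : ⟪ContinuousLinearMap.adjoint T u, ContinuousLinearMap.adjoint T u⟫ = 0 := by
      rw [ContinuousLinearMap.adjoint_inner_left T _ u]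
      exact hu _
    exact inner_self_eq_zero.mp h1
  -- the projection kills N(T*)
  have hTTd : ∀ u : K, ContinuousLinearMap.adjoint T u = 0 → T (Tdag u) = 0 := by
    intro u hu
    have h1 : ⟪u - T (Tdag u), T (Tdag u)⟫ = 0 := hproj u (Tdag u)
    have h2 : ⟪u, T (Tdag u)⟫ = 0 := hadj u hu _
    rw [inner_sub_left, h2] at h1
    have h3 : ⟪T (Tdag u), T (Tdag u)⟫ = (0:ℝ) := by linarith
    have h4 := inner_self_eq_zero.mp h3
    exact h4
  have hPw : ∀ (y' : H) (w : K), ContinuousLinearMap.adjoint T (T y' - w) = 0 →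
      T (Tdag w) = T y' := by
    intro y' w hw
    have h0 : T (Tdag (T y' - w)) = 0 := hTTd _ hw
    rw [map_sub, map_sub, hid] at h0
    exact (sub_eq_zero.mp h0).symm
  -- Pythagoras
  have hPyth : ∀ (x' y' : H) (w : K), ContinuousLinearMap.adjoint T (T y' - w) = 0 →
      ‖T x' - w‖ ^ 2 = ‖T x' - T y'‖ ^ 2 + ‖T y' - w‖ ^ 2 := by
    intro x' y' w hw
    have h0 : ⟪T y' - w, T (x' - y')⟫ = 0 := hadj _ hw _
    have e : T x' - w = (T x' - T y') + (T y' - w) := by abel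
    have h1 : ⟪T x' - T y', T y' - w⟫ = 0 := by
      rw [real_inner_comm, ← map_sub T x' y']
      exact h0
    rw [e, norm_add_sq_real, h1]
    ring
  -- contraction of the projection
  have hcontract : ∀ w : K, ‖T (Tdag w)‖ ≤ ‖w‖ := by
    intro w
    have h := hproj w (Tdag w)
    have e : w = (w - T (Tdag w)) + T (Tdag w) := by abel
    have h1 : ‖w‖ ^ 2 = ‖w - T (Tdag w)‖ ^ 2 + ‖T (Tdag w)‖ ^ 2 := by
      nth_rewrite 1 [e]
      rw [norm_add_sq_real, h]
      ring
    nlinarith [norm_nonneg (w - T (Tdag w)), norm_nonneg (T (Tdag w)), norm_nonneg w]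
  -- strong convexity of the prox objective
  have hF : ∀ w : K, (1 / 2) * ‖T x - w0‖ ^ 2 + g w0 + (1 / 4) * ‖w - w0‖ ^ 2 ≤
      (1 / 2) * ‖T x - w‖ ^ 2 + g w := by
    intro w
    by_cases hww : w = w0
    · subst hww; simp
    · set m : K := (1/2 : ℝ) • w + (1/2 : ℝ) • w0 with hm
      have hmne : m ≠ w0 := by
        intro h
        apply hww
        have h2 : (1/2 : ℝ) • w = (1/2 : ℝ) • w0 := by
          have : (1/2 : ℝ) • w + (1/2 : ℝ) • w0 = (1/2 : ℝ) • w0 + (1/2 : ℝ) • w0 := by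
            rw [← hm, h]; module
          exact add_right_cancel this
        exact smul_right_injective K (by norm_num : (1/2:ℝ) ≠ 0) h2
      have h1 := hproxg (T x) m hmne
      rw [← hw0] at h1
      have h2 : g m ≤ (1/2) * g w + (1/2) * g w0 := by
        have := hgconv.2 (Set.mem_univ w) (Set.mem_univ w0)
          (by norm_num : (0:ℝ) ≤ 1/2) (by norm_num : (0:ℝ) ≤ 1/2) (by norm_num)
        simpa [hm] using this
      set a : K := T x - w with ha
      set b : K := T x - w0 with hb
      have e1 : T x - m = (1/2 : ℝ) • (a + b) := by rw [hm, ha, hb]; module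
      have e2 : ‖w - w0‖ = ‖a - b‖ := by
        have e2' : a - b = w0 - w := by rw [ha, hb]; abel
        rw [e2', norm_sub_rev]
      have hpar := parallelogram_law_with_norm ℝ a b
      have e3 : ‖T x - m‖ ^ 2 = (1/4) * ‖a + b‖ ^ 2 := by
        rw [e1, norm_smul, Real.norm_eq_abs, abs_of_nonneg (by norm_num : (0:ℝ) ≤ 1/2)]
        ring
      rw [e2]
      have hsq : ∀ v : K, ‖v‖ * ‖v‖ = ‖v‖ ^ 2 := fun v => (sq (‖v‖)).symm
      nlinarith [h1, h2, e3, hpar]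
  -- feasibility of w0 for y0
  have hfeas0 : ContinuousLinearMap.adjoint T (T y0 - w0) = 0 := by
    apply hadj'
    intro x'
    have h := hproj w0 x'
    have e : T y0 - w0 = -(w0 - T (Tdag w0)) := by rw [hy0, hw0]; abel
    rw [e, inner_neg_left, h, neg_zero]
  -- lower bound on feasible values
  have hlow : ∀ (y' : H) (w : K), ContinuousLinearMap.adjoint T (T y' - w) = 0 →
      (1 / 2) * ‖T x - w0‖ ^ 2 + g w0 + (1 / 4) * ‖T y' - T y0‖ ^ 2
        - (1 / 2) * ‖T x - T y'‖ ^ 2 ≤ g w + (1 / 2) * ‖T y' - w‖ ^ 2 := by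
    intro y' w hw
    have h1 := hF w
    have h2 := hPyth x y' w hw
    have h3 : ‖T y' - T y0‖ ≤ ‖w - w0‖ := by
      have e : T (Tdag (w - w0)) = T y' - T y0 := by
        rw [map_sub, map_sub, hPw y' w hw]
      rw [← e]
      exact hcontract _
    have h4 : ‖T y' - T y0‖ ^ 2 ≤ ‖w - w0‖ ^ 2 := by
      nlinarith [norm_nonneg (T y' - T y0), norm_nonneg (w - w0)]
    nlinarith
  -- upper bound on the LHS
  have hub : (1 / 2) * ‖T x - T y0‖ ^ 2 + f y0 ≤ (1 / 2) * ‖T x - w0‖ ^ 2 + g w0 := by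
    have hfle : f y0 ≤ g w0 + (1 / 2) * ‖T y0 - w0‖ ^ 2 := by
      rw [hf y0]
      refine ciInf_le ?_ (⟨w0, hfeas0⟩ : {w : K // ContinuousLinearMap.adjoint T (T y0 - w) = 0})
      refine ⟨(1 / 2) * ‖T x - w0‖ ^ 2 + g w0 - (1 / 2) * ‖T x - T y0‖ ^ 2, ?_⟩
      rintro v ⟨⟨w, hw⟩, rfl⟩
      have h5 := hlow y0 w hw
      dsimp only
      linarith [h5, sq_nonneg ‖T y0 - T y0‖]
    have h2 := hPyth x y0 w0 hfeas0
    linarith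
  -- lower bound on the RHS
  have hlb : (1 / 2) * ‖T x - w0‖ ^ 2 + g w0 + (1 / 4) * ‖T y - T y0‖ ^ 2 ≤
      (1 / 2) * ‖T x - T y‖ ^ 2 + f y := by
    rw [hf y]
    have hne : Nonempty {w : K // ContinuousLinearMap.adjoint T (T y - w) = 0} :=
      ⟨⟨T y, by simp⟩⟩
    have h1 : (1 / 2) * ‖T x - w0‖ ^ 2 + g w0 + (1 / 4) * ‖T y - T y0‖ ^ 2
        - (1 / 2) * ‖T x - T y‖ ^ 2 ≤
        ⨅ w : {w : K // ContinuousLinearMap.adjoint T (T y - w) = 0},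
          (g w + (1 / 2) * ‖T y - (w : K)‖ ^ 2) := by
      refine le_ciInf ?_
      rintro ⟨w, hw⟩
      exact hlow y w hw
    linarith
  have hpos : 0 < ‖T y - T y0‖ ^ 2 := by
    have hne : T y ≠ T y0 := fun h => hy (hinj h)
    have := norm_sub_pos_iff.mpr hne
    positivity
  linarith
end
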